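/- If a permutation w of {1,…,n} is indecomposable and avoids the patterns 2413, 2431, 3142 and 4132, then its Rothe diagram D(w) is a Young diagram, i.e., whenever (i,j) ∈ D(w) and 1 ≤ i' ≤ i, 1 ≤ j' ≤ j, one also has (i',j') ∈ D(w). -/

import Mathlib

/-- The Rothe diagram of a permutation of `{0, …, n-1}` (0-based indexing):
cell `(i,j)` belongs to the diagram iff `j < w i` and `i < w⁻¹ j`. -/
def rothe {n : ℕ} (w : Equiv.Perm (Fin n)) : Finset (Fin n × Fin n) :=
  Finset.univ.filter fun c => c.2 < w c.1 ∧ c.1 < w⁻¹ c.2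

/-- `ℓ(w)`: the number of inversions of `w`. -/
def plen {n : ℕ} (w : Equiv.Perm (Fin n)) : ℕ :=
  (Finset.univ.filter fun p : Fin n × Fin n => p.1 < p.2 ∧ w p.2 < w p.1).card

/-- A standard Rothe tableau of `w`: a labelling of the cells of the Rothe diagram by
`1, …, ℓ(w)` (bijectively), strictly increasing along rows and columns; the labelling
is recorded as a function on all of `Fin n × Fin n` that vanishes off the diagram. -/
def IsSRT {n : ℕ} (w : Equiv.Perm (Fin n)) (T : Fin n × Fin n → ℕ) : Prop :=
  Set.BijOn T ↑(rothe w) (Set.Icc 1 (plen w)) ∧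
  (∀ c, c ∉ rothe w → T c = 0) ∧
  (∀ c ∈ rothe w, ∀ c' ∈ rothe w, c.1 = c'.1 → c.2 < c'.2 → T c < T c') ∧
  (∀ c ∈ rothe w, ∀ c' ∈ rothe w, c.2 = c'.2 → c.1 < c'.1 → T c < T c')

noncomputable def srtCard {n : ℕ} (w : Equiv.Perm (Fin n)) : ℕ :=
  Nat.card {T : Fin n × Fin n → ℕ // IsSRT w T}

/-- The hook of a cell of the Rothe diagram. -/
def hook {n : ℕ} (w : Equiv.Perm (Fin n)) (c : Fin n × Fin n) : Finset (Fin n × Fin n) :=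
  (rothe w).filter fun d => (d.1 = c.1 ∧ c.2 ≤ d.2) ∨ (d.2 = c.2 ∧ c.1 ≤ d.1)

/-- A balanced Rothe tableau of `w`. -/
def IsBRT {n : ℕ} (w : Equiv.Perm (Fin n)) (T : Fin n × Fin n → ℕ) : Prop :=
  Set.BijOn T ↑(rothe w) (Set.Icc 1 (plen w)) ∧
  (∀ c, c ∉ rothe w → T c = 0) ∧
  ∀ c ∈ rothe w,
    ((hook w c).filter fun d => T d < T c).card
      = ((rothe w).filter fun d => d.1 = c.1 ∧ c.2 < d.2).card

noncomputable def brtCard {n : ℕ} (w : Equiv.Perm (Fin n)) : ℕ :=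
  Nat.card {T : Fin n × Fin n → ℕ // IsBRT w T}

/-- `w` contains the pattern `p`. -/
def ContainsPattern {n k : ℕ} (w : Equiv.Perm (Fin n)) (p : Equiv.Perm (Fin k)) : Prop :=
  ∃ f : Fin k → Fin n, StrictMono f ∧ ∀ s t : Fin k, w (f s) < w (f t) ↔ p s < p t

/-- The pattern 2413 (0-based one-line notation `1 3 0 2`). -/
def p2413 : Equiv.Perm (Fin 4) :=
  ⟨![1,3,0,2], ![2,0,3,1], by intro x; fin_cases x <;> rfl, by intro x; fin_cases x <;> rfl⟩

def p2431 : Equiv.Perm (Fin 4) :=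
  ⟨![1,3,2,0], ![3,0,2,1], by intro x; fin_cases x <;> rfl, by intro x; fin_cases x <;> rfl⟩

def p3142 : Equiv.Perm (Fin 4) :=
  ⟨![2,0,3,1], ![1,3,0,2], by intro x; fin_cases x <;> rfl, by intro x; fin_cases x <;> rfl⟩

def p4132 : Equiv.Perm (Fin 4) :=
  ⟨![3,0,2,1], ![1,3,2,0], by intro x; fin_cases x <;> rfl, by intro x; fin_cases x <;> rfl⟩

def p4213 : Equiv.Perm (Fin 4) :=
  ⟨![3,1,0,2], ![2,1,3,0], by intro x; fin_cases x <;> rfl, by intro x; fin_cases x <;> rfl⟩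

def p3241 : Equiv.Perm (Fin 4) :=
  ⟨![2,1,3,0], ![3,1,0,2], by intro x; fin_cases x <;> rfl, by intro x; fin_cases x <;> rfl⟩

def p132 : Equiv.Perm (Fin 3) :=
  ⟨![0,2,1], ![0,2,1], by intro x; fin_cases x <;> rfl, by intro x; fin_cases x <;> rfl⟩

/-- The adjacent transposition `s_a` (0-based: swaps `a` and `a+1`), as a permutation
of `Fin n`; it is the identity when `a+1 ≥ n`. -/
def adjT (n a : ℕ) : Equiv.Perm (Fin n) :=
  if h : a + 1 < n then Equiv.swap ⟨a, Nat.lt_of_succ_lt h⟩ ⟨a + 1, h⟩ else 1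

/-- Reduced words of `w`, written with 0-based letters `a` (`0 ≤ a ≤ n-2`). -/
def IsReducedWord {n : ℕ} (w : Equiv.Perm (Fin n)) (L : List ℕ) : Prop :=
  (∀ a ∈ L, a + 1 < n) ∧ (L.map (adjT n)).prod = w ∧ L.length = plen w

noncomputable def rwCard {n : ℕ} (w : Equiv.Perm (Fin n)) : ℕ :=
  Nat.card {L : List ℕ // IsReducedWord w L}

/-- Direct sum of two permutations. -/
def dsum {k m : ℕ} (u : Equiv.Perm (Fin k)) (v : Equiv.Perm (Fin m)) :
    Equiv.Perm (Fin (k + m)) :=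
  finSumFinEquiv.permCongr (Equiv.sumCongr u v)

def dsumSig (p q : Σ m : ℕ, Equiv.Perm (Fin m)) : Σ m : ℕ, Equiv.Perm (Fin m) :=
  ⟨p.1 + q.1, dsum p.2 q.2⟩

/-- The direct sum `w¹ ⊕ w² ⊕ ⋯ ⊕ wᵏ` of a list of permutations. -/
def dsumList (l : List (Σ m : ℕ, Equiv.Perm (Fin m))) : Σ m : ℕ, Equiv.Perm (Fin m) :=
  l.foldr dsumSig ⟨0, 1⟩

/-- `w` is decomposable if it maps `{0,…,k-1}` onto itself for some `0 < k < n`. -/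
def Decomposable {n : ℕ} (w : Equiv.Perm (Fin n)) : Prop :=
  ∃ k : ℕ, 0 < k ∧ k < n ∧ ∀ i : Fin n, (i : ℕ) < k → ((w i : ℕ)) < k

/-- The Lehmer code of `w`. -/
def lehmer {n : ℕ} (w : Equiv.Perm (Fin n)) (i : Fin n) : ℕ :=
  (Finset.univ.filter fun j : Fin n => i < j ∧ w j < w i).card

/-- The cells of the Young diagram of `lam`. -/
def yCells {m : ℕ} (lam : Fin m → ℕ) : Set (Fin m × ℕ) :=
  {c | c.2 < lam c.1}

/-- A standard Young tableau of shape `lam`. -/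
def IsSYT {m : ℕ} (lam : Fin m → ℕ) (T : Fin m × ℕ → ℕ) : Prop :=
  Set.BijOn T (yCells lam) (Set.Icc 1 (∑ i, lam i)) ∧
  (∀ c, c ∉ yCells lam → T c = 0) ∧
  (∀ c ∈ yCells lam, ∀ c' ∈ yCells lam, c.1 = c'.1 → c.2 < c'.2 → T c < T c') ∧
  (∀ c ∈ yCells lam, ∀ c' ∈ yCells lam, c.2 = c'.2 → c.1 < c'.1 → T c < T c')

/-- `f^λ`: the number of standard Young tableaux of shape `lam`. -/
noncomputable def sytCard {m : ℕ} (lam : Fin m → ℕ) : ℕ :=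
  Nat.card {T : Fin m × ℕ → ℕ // IsSYT lam T}


private lemma cp4 {n : ℕ} (w : Equiv.Perm (Fin n)) (p : Equiv.Perm (Fin 4))
    (x0 x1 x2 x3 : Fin n) (h01 : x0 < x1) (h12 : x1 < x2) (h23 : x2 < x3)
    (hiff : ∀ s t : Fin 4, w (![x0,x1,x2,x3] s) < w (![x0,x1,x2,x3] t) ↔ p s < p t) :
    ContainsPattern w p := by
  refine ⟨![x0,x1,x2,x3], ?_, hiff⟩
  intro s t hst
  fin_cases s <;> fin_cases t <;>
    first
      | exact absurd hst (by decide)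
      | exact h01 | exact h12 | exact h23
      | exact h01.trans h12 | exact h12.trans h23
      | exact (h01.trans h12).trans h23

private lemma no132 {n : ℕ} (w : Equiv.Perm (Fin n))
    (hind : ¬ Decomposable w)
    (h1 : ¬ ContainsPattern w p2413) (h2 : ¬ ContainsPattern w p2431)
    (h3 : ¬ ContainsPattern w p3142) (h4 : ¬ ContainsPattern w p4132)
    (a b c : Fin n) (hab : a < b) (hbc : b < c) (hac : w a < w c) (hcb : w c < w b) :
    False := by
  classical
  obtain ⟨b0, hb0mem, hb0min⟩ :=
    Finset.exists_min_image (Finset.univ.filter fun b : Fin n =>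
        ∃ a c : Fin n, a < b ∧ b < c ∧ w a < w c ∧ w c < w b) id
      ⟨b, by
        simp only [Finset.mem_filter, Finset.mem_univ, true_and]
        exact ⟨a, c, hab, hbc, hac, hcb⟩⟩
  simp only [Finset.mem_filter, Finset.mem_univ, true_and] at hb0mem
  obtain ⟨a1, c1, ha1, hc1, hv1, hv2⟩ := hb0mem
  have hbmin : ∀ d : Fin n,
      (∃ a c : Fin n, a < d ∧ d < c ∧ w a < w c ∧ w c < w d) → b0 ≤ d := by
    intro d hd
    exact hb0min d (by simp only [Finset.mem_filter, Finset.mem_univ, true_and]; exact hd)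
  obtain ⟨c0, hc0mem, hc0min⟩ :=
    Finset.exists_min_image (Finset.univ.filter fun c : Fin n =>
        ∃ a : Fin n, a < b0 ∧ b0 < c ∧ w a < w c ∧ w c < w b0) (fun c => (w c : ℕ))
      ⟨c1, by
        simp only [Finset.mem_filter, Finset.mem_univ, true_and]
        exact ⟨a1, ha1, hc1, hv1, hv2⟩⟩
  simp only [Finset.mem_filter, Finset.mem_univ, true_and] at hc0mem
  obtain ⟨a0, ha0b, hbc0, hac0, hc0b⟩ := hc0mem
  have hcmin : ∀ d : Fin n, b0 < d → w a0 < w d → w d < w b0 → (w c0 : ℕ) ≤ (w d : ℕ) := by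
    intro d hd1 hd2 hd3
    exact hc0min d (by
      simp only [Finset.mem_filter, Finset.mem_univ, true_and]
      exact ⟨a0, ha0b, hd1, hd2, hd3⟩)
  have Vac : (w a0 : ℕ) < w c0 := hac0
  have Vcb : (w c0 : ℕ) < w b0 := hc0b
  have hval : ∀ x y : Fin n, x ≠ y → (w x : ℕ) ≠ (w y : ℕ) := by
    intro x y hxy he
    exact hxy (w.injective (Fin.val_injective he))
  -- all positions before a0 carry values below w c0
  have fact2 : ∀ d : Fin n, d < a0 → (w d : ℕ) < w c0 := by
    intro d hd
    by_contra hcon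
    push_neg at hcon
    have hdc : (w c0 : ℕ) < w d :=
      lt_of_le_of_ne hcon (hval c0 d (by
        intro he
        exact absurd (he ▸ (hd.trans (ha0b.trans hbc0))) (lt_irrefl _)))
    have hdb' : (w d : ℕ) ≠ (w b0 : ℕ) := hval d b0 (ne_of_lt (hd.trans ha0b))
    rcases lt_or_gt_of_ne hdb' with hdb | hdb
    · refine h3 (cp4 w p3142 d a0 b0 c0 hd ha0b hbc0 ?_)
      intro s t
      fin_cases s <;> fin_cases t <;>
        simp only [p3142, Equiv.coe_fn_mk, Fin.lt_def, Matrix.cons_val_zero,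
          Matrix.cons_val_one, Matrix.head_cons, Matrix.cons_val_two, Matrix.tail_cons,
          Matrix.cons_val_three, Fin.isValue, Fin.val_zero, Fin.val_one] <;>
        norm_num <;> omega
    · refine h4 (cp4 w p4132 d a0 b0 c0 hd ha0b hbc0 ?_)
      intro s t
      fin_cases s <;> fin_cases t <;>
        simp only [p4132, Equiv.coe_fn_mk, Fin.lt_def, Matrix.cons_val_zero,
          Matrix.cons_val_one, Matrix.head_cons, Matrix.cons_val_two, Matrix.tail_cons,
          Matrix.cons_val_three, Fin.isValue, Fin.val_zero, Fin.val_one] <;>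
        norm_num <;> omega
  -- all positions after b0 carry values at least w c0
  have claim2 : ∀ d : Fin n, b0 < d → (w c0 : ℕ) ≤ w d := by
    intro d hbd
    by_cases hdc0 : d = c0
    · subst hdc0; exact le_refl _
    by_contra hcon
    push_neg at hcon
    have hda' : (w d : ℕ) ≠ (w a0 : ℕ) := hval d a0 (ne_of_gt (ha0b.trans hbd))
    rcases lt_or_gt_of_ne hda' with hda | hda
    · rcases lt_or_gt_of_ne hdc0 with hdlt | hdgt
      · refine h1 (cp4 w p2413 a0 b0 d c0 ha0b hbd hdlt ?_)
        intro s t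
        fin_cases s <;> fin_cases t <;>
          simp only [p2413, Equiv.coe_fn_mk, Fin.lt_def, Matrix.cons_val_zero,
            Matrix.cons_val_one, Matrix.head_cons, Matrix.cons_val_two, Matrix.tail_cons,
            Matrix.cons_val_three, Fin.isValue, Fin.val_zero, Fin.val_one] <;>
          norm_num <;> omega
      · refine h2 (cp4 w p2431 a0 b0 c0 d ha0b hbc0 hdgt ?_)
        intro s t
        fin_cases s <;> fin_cases t <;>
          simp only [p2431, Equiv.coe_fn_mk, Fin.lt_def, Matrix.cons_val_zero,
            Matrix.cons_val_one, Matrix.head_cons, Matrix.cons_val_two, Matrix.tail_cons,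
            Matrix.cons_val_three, Fin.isValue, Fin.val_zero, Fin.val_one] <;>
          norm_num <;> omega
    · have := hcmin d hbd hda (show (w d : ℕ) < (w b0 : ℕ) by omega)
      omega
  -- all positions before b0 carry values below w c0
  have claim1 : ∀ d : Fin n, d < b0 → (w d : ℕ) < w c0 := by
    intro d hdb
    rcases lt_trichotomy d a0 with h | h | h
    · exact fact2 d h
    · subst h; exact Vac
    · by_contra hcon
      push_neg at hcon
      have hne : (w c0 : ℕ) ≠ (w d : ℕ) := hval c0 d (ne_of_gt (hdb.trans hbc0))
      have hcd : (w c0 : ℕ) < w d := lt_of_le_of_ne hcon hne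
      have := hbmin d ⟨a0, c0, h, hdb.trans hbc0, hac0, hcd⟩
      exact absurd hdb (not_lt.mpr this)
  -- values below w c0 occur at positions below b0
  have hinv : ∀ j : Fin n, j < w c0 → w⁻¹ j < b0 := by
    intro j hj
    have hj' : (j : ℕ) < w c0 := hj
    by_contra hcon
    push_neg at hcon
    rcases eq_or_lt_of_le hcon with he | hlt
    · have hb : w b0 = j := by
        rw [he, show ∀ x, w (w⁻¹ x) = x from w.apply_symm_apply]
      have : (w b0 : ℕ) = j := congrArg Fin.val hb
      omega
    · have := claim2 (w⁻¹ j) hlt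
      rw [show ∀ x, w (w⁻¹ x) = x from w.apply_symm_apply] at this
      have : (w c0 : ℕ) ≤ j := this
      omega
  have hcb0 : (w c0 : ℕ) ≤ b0 := by
    have hcard := Finset.card_le_card_of_injOn
      (s := Finset.Iio (w c0)) (t := Finset.Iio b0) (fun j => w⁻¹ j)
      (fun j hj => Finset.mem_Iio.mpr (hinv j (Finset.mem_Iio.mp hj)))
      (fun x _ y _ h => (Equiv.injective w⁻¹) h)
    simpa [Fin.card_Iio] using hcard
  apply hind
  refine ⟨(w c0 : ℕ), by omega, (w c0).isLt, ?_⟩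
  intro i hi
  exact claim1 i (show (i : ℕ) < (b0 : ℕ) by omega)

/-- the Rothe diagram of an indecomposable permutation avoiding
2413, 2431, 3142, 4132 is a Young diagram. -/
theorem rothe_isYoung {n : ℕ} (w : Equiv.Perm (Fin n))
    (hind : ¬ Decomposable w)
    (h1 : ¬ ContainsPattern w p2413) (h2 : ¬ ContainsPattern w p2431)
    (h3 : ¬ ContainsPattern w p3142) (h4 : ¬ ContainsPattern w p4132) :
    ∀ c ∈ rothe w, ∀ i' j' : Fin n, i' ≤ c.1 → j' ≤ c.2 → (i', j') ∈ rothe w := by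
  intro c hc i' j' hi hj
  have key := no132 w hind h1 h2 h3 h4
  simp only [rothe, Finset.mem_filter, Finset.mem_univ, true_and] at hc ⊢
  obtain ⟨hc1, hc2⟩ := hc
  have hwj : w (w⁻¹ c.2) = c.2 := w.apply_symm_apply c.2
  constructor
  · by_contra h
    push_neg at h
    have hle : w i' ≤ c.2 := le_trans h hj
    have hi'i : i' < c.1 := lt_of_le_of_ne hi (by
      intro he
      subst he
      exact absurd (lt_of_le_of_lt hle hc1) (lt_irrefl _))
    have hlt : w i' < w (w⁻¹ c.2) := by
      rw [hwj]
      refine lt_of_le_of_ne hle ?_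
      intro he
      have : i' = w⁻¹ c.2 := w.injective (by rw [he, hwj])
      exact absurd (this ▸ (hi'i.trans hc2)) (lt_irrefl _)
    exact absurd (key i' c.1 (w⁻¹ c.2) hi'i hc2 hlt (show w (w⁻¹ c.2) < w c.1 by rw [hwj]; exact hc1)) not_false
  · by_contra h
    push_neg at h
    set d := w⁻¹ j' with hd
    have hwd : w d = j' := w.apply_symm_apply j'
    have hdi : d < c.1 := by
      refine lt_of_le_of_ne (le_trans h hi) ?_
      intro he
      have : w c.1 = j' := he ▸ hwd
      have : (w c.1 : ℕ) ≤ c.2 := this ▸ hj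
      exact absurd (lt_of_le_of_lt this hc1) (lt_irrefl _)
    have hlt : w d < w (w⁻¹ c.2) := by
      rw [hwj, hwd]
      refine lt_of_le_of_ne hj ?_
      intro he
      have : d = w⁻¹ c.2 := w.injective (by rw [hwd, he, hwj])
      exact absurd (this ▸ (hdi.trans hc2)) (lt_irrefl _)
    exact absurd (key d c.1 (w⁻¹ c.2) hdi hc2 hlt (show w (w⁻¹ c.2) < w c.1 by rw [hwj]; exact hc1)) not_false
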